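/- Consider the bipartite system type with M_1 = M_2 = O_1 = O_2 = {0,1}, and let p be a probabilistic empirical model with p(m̄) > 0 for every m̄ ∈ M, whose conditional probabilities vanish at the following entries: p((1,0)|(0,0)) = p((0,1)|(0,0)) = 0, p((1,0)|(1,0)) = p((0,1)|(1,0)) = 0, p((1,0)|(0,1)) = p((0,1)|(0,1)) = 0, and p((0,0)|(1,1)) = p((1,1)|(1,1)) = 0. If p satisfies Probabilistic No-Signalling, then every one of the remaining eight conditional probabilities equals 1/2; that is, p(ō|m̄) = 1/2 whenever ō_1 ⊕ ō_2 = m̄_1·m̄_2 (where ⊕ is addition mod 2). -/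

import Mathlib

private lemma sum4 (F : (Fin 2 → Bool) → ℝ) :
    ∑ f : Fin 2 → Bool, F f
      = F ![false,false] + F ![false,true] + F ![true,false] + F ![true,true] := by
  have h : (Finset.univ : Finset (Fin 2 → Bool)) =
      {![false,false], ![false,true], ![true,false], ![true,true]} := by decide
  rw [h, Finset.sum_insert (by decide), Finset.sum_insert (by decide),
      Finset.sum_insert (by decide), Finset.sum_singleton]
  ring

/-- Any no-signalling probabilistic model of PR-box type (bipartite,
two binary measurements and binary outcomes, every measurement possible,
with the PR-box zero pattern of conditional probabilities) must have all
remaining conditional probabilities equal to 1/2. -/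
theorem stmt_19 (p : (Fin 2 → Bool) → (Fin 2 → Bool) → ℝ)
    -- p is a probability distribution
    (hpos : ∀ m o, 0 ≤ p m o)
    (hsum : ∑ m : Fin 2 → Bool, ∑ o : Fin 2 → Bool, p m o = 1)
    -- every measurement combination has positive probability
    (hM : ∀ m : Fin 2 → Bool, 0 < ∑ o : Fin 2 → Bool, p m o)
    -- the eight vanishing conditional probabilities
    (hz1 : p ![false, false] ![true, false] / (∑ o : Fin 2 → Bool, p ![false, false] o) = 0)
    (hz2 : p ![false, false] ![false, true] / (∑ o : Fin 2 → Bool, p ![false, false] o) = 0)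
    (hz3 : p ![true, false] ![true, false] / (∑ o : Fin 2 → Bool, p ![true, false] o) = 0)
    (hz4 : p ![true, false] ![false, true] / (∑ o : Fin 2 → Bool, p ![true, false] o) = 0)
    (hz5 : p ![false, true] ![true, false] / (∑ o : Fin 2 → Bool, p ![false, true] o) = 0)
    (hz6 : p ![false, true] ![false, true] / (∑ o : Fin 2 → Bool, p ![false, true] o) = 0)
    (hz7 : p ![true, true] ![false, false] / (∑ o : Fin 2 → Bool, p ![true, true] o) = 0)
    (hz8 : p ![true, true] ![true, true] / (∑ o : Fin 2 → Bool, p ![true, true] o) = 0)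
    -- Probabilistic No-Signalling
    (hPNS : ∀ (i : Fin 2) (m m' : Fin 2 → Bool), m i = m' i → ∀ o : Bool,
        (0 < ∑ ob : Fin 2 → Bool, p m ob) →
        (0 < ∑ ob : Fin 2 → Bool, p m' ob) →
        (∑ ob : Fin 2 → Bool, if ob i = o then p m ob else 0) /
            (∑ ob : Fin 2 → Bool, p m ob)
          = (∑ ob : Fin 2 → Bool, if ob i = o then p m' ob else 0) /
            (∑ ob : Fin 2 → Bool, p m' ob)) :
    -- all remaining conditionals are 1/2
    ∀ m o : Fin 2 → Bool, xor (o 0) (o 1) = (m 0 && m 1) →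
      p m o / (∑ ob : Fin 2 → Bool, p m ob) = 1 / 2 := by
  -- notation
  set N00 := ∑ o : Fin 2 → Bool, p ![false,false] o with hN00def
  set N01 := ∑ o : Fin 2 → Bool, p ![false,true] o with hN01def
  set N10 := ∑ o : Fin 2 → Bool, p ![true,false] o with hN10def
  set N11 := ∑ o : Fin 2 → Bool, p ![true,true] o with hN11def
  have hN00 : 0 < N00 := hM _
  have hN01 : 0 < N01 := hM _
  have hN10 : 0 < N10 := hM _
  have hN11 : 0 < N11 := hM _
  -- zeros
  have z1 : p ![false,false] ![true,false] = 0 := by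
    rcases div_eq_zero_iff.mp hz1 with h | h
    · exact h
    · exact absurd h hN00.ne'
  have z2 : p ![false,false] ![false,true] = 0 := by
    rcases div_eq_zero_iff.mp hz2 with h | h
    · exact h
    · exact absurd h hN00.ne'
  have z3 : p ![true,false] ![true,false] = 0 := by
    rcases div_eq_zero_iff.mp hz3 with h | h
    · exact h
    · exact absurd h hN10.ne'
  have z4 : p ![true,false] ![false,true] = 0 := by
    rcases div_eq_zero_iff.mp hz4 with h | h
    · exact h
    · exact absurd h hN10.ne'
  have z5 : p ![false,true] ![true,false] = 0 := by
    rcases div_eq_zero_iff.mp hz5 with h | h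
    · exact h
    · exact absurd h hN01.ne'
  have z6 : p ![false,true] ![false,true] = 0 := by
    rcases div_eq_zero_iff.mp hz6 with h | h
    · exact h
    · exact absurd h hN01.ne'
  have z7 : p ![true,true] ![false,false] = 0 := by
    rcases div_eq_zero_iff.mp hz7 with h | h
    · exact h
    · exact absurd h hN11.ne'
  have z8 : p ![true,true] ![true,true] = 0 := by
    rcases div_eq_zero_iff.mp hz8 with h | h
    · exact h
    · exact absurd h hN11.ne'
  -- expanded normalizations
  have e00 : N00 = p ![false,false] ![false,false] + p ![false,false] ![true,true] := by
    rw [hN00def, sum4]; rw [z1, z2]; ring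
  have e01 : N01 = p ![false,true] ![false,false] + p ![false,true] ![true,true] := by
    rw [hN01def, sum4]; rw [z5, z6]; ring
  have e10 : N10 = p ![true,false] ![false,false] + p ![true,false] ![true,true] := by
    rw [hN10def, sum4]; rw [z3, z4]; ring
  have e11 : N11 = p ![true,true] ![false,true] + p ![true,true] ![true,false] := by
    rw [hN11def, sum4]; rw [z7, z8]; ring
  -- abbreviations for conditionals
  have ha : p ![false,false] ![false,false] / N00 + p ![false,false] ![true,true] / N00 = 1 := by
    rw [← add_div, ← e00, div_self hN00.ne']
  have hc : p ![true,false] ![false,false] / N10 + p ![true,false] ![true,true] / N10 = 1 := by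
    rw [← add_div, ← e10, div_self hN10.ne']
  have he : p ![false,true] ![false,false] / N01 + p ![false,true] ![true,true] / N01 = 1 := by
    rw [← add_div, ← e01, div_self hN01.ne']
  have hg : p ![true,true] ![false,true] / N11 + p ![true,true] ![true,false] / N11 = 1 := by
    rw [← add_div, ← e11, div_self hN11.ne']
  -- PNS instances
  have P1 := hPNS 0 ![false,false] ![false,true] rfl false hN00 hN01
  have P2 := hPNS 0 ![true,false] ![true,true] rfl false hN10 hN11
  have P3 := hPNS 1 ![false,false] ![true,false] rfl false hN00 hN10
  have P4 := hPNS 1 ![false,true] ![true,true] rfl false hN01 hN11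
  simp only [sum4] at P1 P2 P3 P4
  simp only [Matrix.cons_val_zero, Matrix.cons_val_one, Matrix.head_cons] at P1 P2 P3 P4
  norm_num [z1, z2, z3, z4, z5, z6, z7, z8] at P1 P2 P3 P4
  rw [← e00, ← e01] at P1
  rw [← e10, ← e11] at P2
  rw [← e00, ← e10] at P3
  rw [← e01, ← e11] at P4
  -- conclude
  intro m o h
  have hm : m = ![m 0, m 1] := by
    funext i; fin_cases i <;> simp
  have ho : o = ![o 0, o 1] := by
    funext i; fin_cases i <;> simp
  rw [hm, ho]
  cases hm0 : m 0 <;> cases hm1 : m 1 <;> cases ho0 : o 0 <;> cases ho1 : o 1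
  · rw [← hN00def]; linarith
  · simp [hm0, hm1, ho0, ho1] at h
  · simp [hm0, hm1, ho0, ho1] at h
  · rw [← hN00def]; linarith
  · rw [← hN01def]; linarith
  · simp [hm0, hm1, ho0, ho1] at h
  · simp [hm0, hm1, ho0, ho1] at h
  · rw [← hN01def]; linarith
  · rw [← hN10def]; linarith
  · simp [hm0, hm1, ho0, ho1] at h
  · simp [hm0, hm1, ho0, ho1] at h
  · rw [← hN10def]; linarith
  · simp [hm0, hm1, ho0, ho1] at h
  · rw [← hN11def]; linarith
  · rw [← hN11def]; linarith
  · simp [hm0, hm1, ho0, ho1] at h
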